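/- (Minty's method) Let F : D(F) ⊆ H → H be monotone, and let D ⊆ D(F) and operators F_k : D → H (k ∈ ℕ) satisfy: (1) each F_k is monotone on D; (2) F_k(v) → F(v) strongly in H for every v ∈ D; (3) for every v ∈ D(F) there exists a sequence v_k ∈ D with v_k → v in H and F(v_k) ⇀ F(v) weakly in H; (4) there exist u_k ∈ D with ⟨F_k(u_k), u_k - v⟩ ≤ 0 for all v ∈ D; (5) a subsequence of (u_k) converges weakly to some ū ∈ H. Then ū satisfies ⟨F(v), ū - v⟩ ≤ 0 for all v ∈ D(F), i.e., ū is a weak solution of the variational inequality for F. -/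

import Mathlib

open Filter Topology

lemma weak_conv_bounded
    {H : Type*} [NormedAddCommGroup H] [InnerProductSpace ℝ H] [CompleteSpace H]
    (x : ℕ → H) (h : ∀ w : H, ∃ c : ℝ, Tendsto (fun k => (inner ℝ w (x k) : ℝ)) atTop (𝓝 c)) :
    ∃ C : ℝ, ∀ k, ‖x k‖ ≤ C := by
  obtain ⟨C, hC⟩ := banach_steinhaus (g := fun k => innerSL ℝ (x k)) (fun w => by
    obtain ⟨c, hc⟩ := h w
    have hb : Bornology.IsBounded (Set.range fun k => (inner ℝ w (x k) : ℝ)) :=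
      hc.cauchySeq.isBounded_range
    obtain ⟨M, hM⟩ := (isBounded_iff_forall_norm_le).1 hb
    exact ⟨M, fun k => by
      have := hM _ ⟨k, rfl⟩
      simpa [innerSL_apply_apply, real_inner_comm] using this⟩)
  exact ⟨C, fun k => by simpa [innerSL_apply_norm] using hC k⟩


/-- Minty's method: given a monotone operator `F` with domain `DF` in a real Hilbert space,
a dense-enough subset `D ⊆ DF`, and monotone approximations `Fk` converging to `F` on `D`,
together with strong solutions `uk` of the approximate variational inequalities, any weak
limit `ubar` of (a subsequence of) the `uk` is a weak solution of the variational inequality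
for `F`. -/
theorem minty_method
    {H : Type*} [NormedAddCommGroup H] [InnerProductSpace ℝ H] [CompleteSpace H]
    (DF : Set H) (F : H → H)
    (hFmono : ∀ u ∈ DF, ∀ v ∈ DF, (0 : ℝ) ≤ inner ℝ (F u - F v) (u - v))
    (D : Set H) (hD : D ⊆ DF)
    (Fk : ℕ → H → H)
    -- (1) monotonicity of each `Fk` on `D`
    (hFkmono : ∀ k : ℕ, ∀ u ∈ D, ∀ v ∈ D, (0 : ℝ) ≤ inner ℝ (Fk k u - Fk k v) (u - v))
    -- (2) strong convergence `Fk v → F v` for `v ∈ D`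
    (happrox : ∀ v ∈ D, Tendsto (fun k => Fk k v) atTop (𝓝 (F v)))
    -- (3) lower semicontinuity-type condition
    (hlsc : ∀ v ∈ DF, ∃ vk : ℕ → H, (∀ k, vk k ∈ D) ∧
      Tendsto vk atTop (𝓝 v) ∧
      (∀ w : H, Tendsto (fun k => (inner ℝ w (F (vk k)) : ℝ)) atTop (𝓝 (inner ℝ w (F v)))))
    -- (4) strong solutions of the regularized problems
    (uk : ℕ → H) (hukD : ∀ k, uk k ∈ D)
    (hss : ∀ k : ℕ, ∀ v ∈ D, (inner ℝ (Fk k (uk k)) (uk k - v) : ℝ) ≤ 0)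
    -- (5) weak convergence of a subsequence to `ubar`
    (ubar : H) (φ : ℕ → ℕ) (hφ : StrictMono φ)
    (hweakconv : ∀ w : H, Tendsto (fun k => (inner ℝ w (uk (φ k)) : ℝ)) atTop (𝓝 (inner ℝ w ubar))) :
    ∀ v ∈ DF, (inner ℝ (F v) (ubar - v) : ℝ) ≤ 0 := by
  -- boundedness of the subsequence
  obtain ⟨C, hC⟩ := weak_conv_bounded (fun k => uk (φ k))
    (fun w => ⟨inner ℝ w ubar, hweakconv w⟩)
  have hC0 : (0 : ℝ) ≤ C := le_trans (norm_nonneg _) (hC 0)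
  -- Step 1: the weak VI holds for all v ∈ D
  have step1 : ∀ v ∈ D, (inner ℝ (F v) (ubar - v) : ℝ) ≤ 0 := by
    intro v hv
    -- ⟨Fk k v, uk k - v⟩ ≤ 0
    have key : ∀ k, (inner ℝ (Fk k v) (uk k - v) : ℝ) ≤ 0 := fun k => by
      have h1 := hFkmono k (uk k) (hukD k) v hv
      have h2 := hss k v hv
      have : (inner ℝ (Fk k v) (uk k - v) : ℝ) ≤ inner ℝ (Fk k (uk k)) (uk k - v) := by
        have := h1
        rw [inner_sub_left] at this
        linarith
      linarith
    set a : ℕ → ℝ := fun k => inner ℝ (F v) (uk (φ k) - v) with ha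
    set b : ℕ → ℝ := fun k => ‖F v - Fk (φ k) v‖ * (C + ‖v‖) with hb
    have hab : ∀ k, a k ≤ b k := by
      intro k
      have hsplit : a k = inner ℝ (F v - Fk (φ k) v) (uk (φ k) - v)
          + inner ℝ (Fk (φ k) v) (uk (φ k) - v) := by
        simp [ha, inner_sub_left]
      have h1 : (inner ℝ (F v - Fk (φ k) v) (uk (φ k) - v) : ℝ)
          ≤ ‖F v - Fk (φ k) v‖ * ‖uk (φ k) - v‖ := real_inner_le_norm _ _
      have h2 : ‖uk (φ k) - v‖ ≤ C + ‖v‖ := by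
        calc ‖uk (φ k) - v‖ ≤ ‖uk (φ k)‖ + ‖v‖ := norm_sub_le _ _
        _ ≤ C + ‖v‖ := by linarith [hC k]
      have h3 : ‖F v - Fk (φ k) v‖ * ‖uk (φ k) - v‖ ≤ b k :=
        mul_le_mul_of_nonneg_left h2 (norm_nonneg _)
      have := key (φ k)
      rw [hsplit]; linarith
    have hatend : Tendsto a atTop (𝓝 (inner ℝ (F v) (ubar - v))) := by
      have := (hweakconv (F v)).sub_const (inner ℝ (F v) v : ℝ)
      simpa [ha, inner_sub_right] using this
    have hbtend : Tendsto b atTop (𝓝 0) := by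
      have h1 : Tendsto (fun k => Fk (φ k) v) atTop (𝓝 (F v)) :=
        (happrox v hv).comp hφ.tendsto_atTop
      have h2 : Tendsto (fun k => ‖F v - Fk (φ k) v‖) atTop (𝓝 0) := by
        have := ((tendsto_const_nhds (x := F v)).sub h1).norm
        simpa using this
      have := h2.mul_const (C + ‖v‖)
      simpa [hb] using this
    exact le_of_tendsto_of_tendsto' hatend hbtend hab
  -- Step 2: extend to all of DF
  intro v hv
  obtain ⟨vk, hvkD, hvkconv, hFweak⟩ := hlsc v hv
  obtain ⟨C', hC'⟩ := weak_conv_bounded (fun k => F (vk k))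
    (fun w => ⟨inner ℝ w (F v), hFweak w⟩)
  set b : ℕ → ℝ := fun k =>
    ((inner ℝ (ubar - v) (F v) : ℝ) - inner ℝ (ubar - v) (F (vk k)))
      + C' * ‖vk k - v‖ with hb
  have hab : ∀ k, (inner ℝ (F v) (ubar - v) : ℝ) ≤ b k := by
    intro k
    have h1 : (inner ℝ (F (vk k)) (ubar - vk k) : ℝ) ≤ 0 := step1 (vk k) (hvkD k)
    have hsplit : (inner ℝ (F v) (ubar - v) : ℝ)
        = ((inner ℝ (ubar - v) (F v) : ℝ) - inner ℝ (ubar - v) (F (vk k)))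
          + inner ℝ (F (vk k)) (ubar - vk k) + inner ℝ (F (vk k)) (vk k - v) := by
      rw [real_inner_comm (ubar - v) (F v), real_inner_comm (F (vk k)) (ubar - v)]
      simp only [inner_sub_right]
      ring
    have h2 : (inner ℝ (F (vk k)) (vk k - v) : ℝ) ≤ C' * ‖vk k - v‖ := by
      calc (inner ℝ (F (vk k)) (vk k - v) : ℝ) ≤ ‖F (vk k)‖ * ‖vk k - v‖ :=
            real_inner_le_norm _ _
        _ ≤ C' * ‖vk k - v‖ := mul_le_mul_of_nonneg_right (hC' k) (norm_nonneg _)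
    rw [hsplit]; simp only [hb]; linarith
  have hbtend : Tendsto b atTop (𝓝 0) := by
    have h1 : Tendsto (fun k => ((inner ℝ (ubar - v) (F v) : ℝ)
        - inner ℝ (ubar - v) (F (vk k)))) atTop (𝓝 0) := by
      have := (tendsto_const_nhds (x := (inner ℝ (ubar - v) (F v) : ℝ))).sub (hFweak (ubar - v))
      simpa using this
    have h2 : Tendsto (fun k => C' * ‖vk k - v‖) atTop (𝓝 0) := by
      have := (hvkconv.sub_const v).norm
      have := (this.const_mul C')
      simpa using this
    simpa [hb] using h1.add h2
  exact le_of_tendsto_of_tendsto' tendsto_const_nhds hbtend hab
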